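/- Let a and b be discrete phase-type (PH) distributions on ℕ (the distributions of independent ℕ-valued random variables X and Y), and suppose s = ∑ₙ a n · b n > 0. Then the conditional distribution of X given the event X = Y, namely n ↦ a n · b n / s, belongs to F_alg. -/

import Mathlib

open Matrix Filter

/-- `p` is a probability distribution on ℕ. -/
def IsProbDist (p : ℕ → ℝ) : Prop :=
  (∀ n, 0 ≤ p n) ∧ HasSum p 1

/-- `p` is a discrete phase-type (PH) distribution on ℕ. -/
def IsPH (p : ℕ → ℝ) : Prop :=
  IsProbDist p ∧
  ∃ m : ℕ, 1 ≤ m ∧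
    ∃ (α : Fin m → ℝ) (T : Matrix (Fin m) (Fin m) ℝ),
      (∀ i, 0 ≤ α i) ∧ (∑ i, α i) ≤ 1 ∧
      (∀ i j, 0 ≤ T i j) ∧ (∀ i, (∑ j, T i j) ≤ 1) ∧
      p 0 = 1 - ∑ i, α i ∧
      ∀ n, 1 ≤ n → p n = α ⬝ᵥ (T ^ (n - 1)).mulVec (fun i => 1 - ∑ j, T i j)

/-- One step of the SCFG fixed-point iteration: substitute the power series
`f W` for the variable `y_W` and `PowerSeries.X` for the variable `z`
(`none` encodes `z`, `some W` encodes `y_W`). -/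
noncomputable def grammarStep {V : Type} (P : V → MvPolynomial (Option V) ℝ)
    (f : V → PowerSeries ℝ) (W : V) : PowerSeries ℝ :=
  MvPolynomial.aeval (fun o : Option V => o.elim PowerSeries.X f) (P W)

/-- The SCFG fixed-point iteration starting from the zero tuple. -/
noncomputable def grammarIter {V : Type} (P : V → MvPolynomial (Option V) ℝ) :
    ℕ → V → PowerSeries ℝ
  | 0 => fun _ => 0
  | k + 1 => grammarStep P (grammarIter P k)

/-- `q` belongs to `F_alg`: `q` is a normalized ℝ₊-algebraic sequence, i.e. it is
produced by a stochastic context-free grammar over a one-letter alphabet.  There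
are a finite set `V` of nonterminals with start symbol `S` and polynomials `P W`
with nonnegative coefficients in the variables `(y_W)` and `z` such that the
fixed-point iteration from the zero tuple converges coefficientwise to a tuple
`f` of power series with nonnegative coefficients satisfying `f_V = P_V(f, z)`,
the coefficients of `f S` have finite positive sum `s`, and `q n = [zⁿ](f S)/s`. -/
def MemFalg (q : ℕ → ℝ) : Prop :=
  ∃ (V : Type) (_ : Fintype V) (S : V) (P : V → MvPolynomial (Option V) ℝ)
    (f : V → PowerSeries ℝ),
    (∀ W d, 0 ≤ MvPolynomial.coeff d (P W)) ∧
    (∀ W (n : ℕ), Tendsto (fun k => PowerSeries.coeff n (grammarIter P k W))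
      atTop (nhds (PowerSeries.coeff n (f W)))) ∧
    (∀ W, f W = grammarStep P f W) ∧
    (∀ W (n : ℕ), 0 ≤ PowerSeries.coeff n (f W)) ∧
    ∃ s : ℝ, HasSum (fun n => PowerSeries.coeff n (f S)) s ∧ 0 < s ∧
      ∀ n, q n = PowerSeries.coeff n (f S) / s

namespace PHFalgAux

lemma pow_entry_nonneg {m : ℕ} {T : Matrix (Fin m) (Fin m) ℝ}
    (hT : ∀ i j, 0 ≤ T i j) (n : ℕ) : ∀ i j, 0 ≤ (T ^ n) i j := by
  induction n with
  | zero =>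
    intro i j; rw [pow_zero, Matrix.one_apply]; split <;> norm_num
  | succ n ih =>
    intro i j; rw [pow_succ, Matrix.mul_apply]
    exact Finset.sum_nonneg fun k _ => mul_nonneg (ih i k) (hT k j)

lemma mulVec_nonneg {m : ℕ} {T : Matrix (Fin m) (Fin m) ℝ} {t : Fin m → ℝ}
    (hT : ∀ i j, 0 ≤ T i j) (ht : ∀ i, 0 ≤ t i) (i : Fin m) : 0 ≤ T.mulVec t i := by
  simp only [Matrix.mulVec, dotProduct]
  exact Finset.sum_nonneg fun j _ => mul_nonneg (hT i j) (ht j)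

variable {m m' : ℕ}

/-- the power series of the "pair" nonterminals -/
noncomputable def G (T : Matrix (Fin m) (Fin m) ℝ) (U : Matrix (Fin m') (Fin m') ℝ)
    (t : Fin m → ℝ) (u : Fin m' → ℝ) (p : Fin m × Fin m') : PowerSeries ℝ :=
  PowerSeries.mk fun n => match n with
    | 0 => 0
    | Nat.succ k => (T ^ k).mulVec t p.1 * (U ^ k).mulVec u p.2

/-- the grammar -/
noncomputable def Pg (c0 : ℝ) (α : Fin m → ℝ) (β : Fin m' → ℝ)
    (T : Matrix (Fin m) (Fin m) ℝ) (U : Matrix (Fin m') (Fin m') ℝ)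
    (t : Fin m → ℝ) (u : Fin m' → ℝ) :
    Option (Fin m × Fin m') → MvPolynomial (Option (Option (Fin m × Fin m'))) ℝ
  | none => MvPolynomial.C c0 +
      ∑ p, MvPolynomial.C (α p.1 * β p.2) * MvPolynomial.X (some (some p))
  | some p => MvPolynomial.X none * (MvPolynomial.C (t p.1 * u p.2) +
      ∑ q, MvPolynomial.C (T p.1 q.1 * U p.2 q.2) * MvPolynomial.X (some (some q)))

/-- the fixed point -/
noncomputable def Fg (c0 : ℝ) (α : Fin m → ℝ) (β : Fin m' → ℝ)
    (T : Matrix (Fin m) (Fin m) ℝ) (U : Matrix (Fin m') (Fin m') ℝ)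
    (t : Fin m → ℝ) (u : Fin m' → ℝ) :
    Option (Fin m × Fin m') → PowerSeries ℝ
  | none => PowerSeries.C c0 + ∑ p, PowerSeries.C (α p.1 * β p.2) * G T U t u p
  | some p => G T U t u p

lemma step_none (c0 : ℝ) (α : Fin m → ℝ) (β : Fin m' → ℝ)
    (T : Matrix (Fin m) (Fin m) ℝ) (U : Matrix (Fin m') (Fin m') ℝ)
    (t : Fin m → ℝ) (u : Fin m' → ℝ)
    (h : Option (Fin m × Fin m') → PowerSeries ℝ) :
    grammarStep (Pg c0 α β T U t u) h none =
      PowerSeries.C c0 + ∑ p, PowerSeries.C (α p.1 * β p.2) * h (some p) := by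
  simp [grammarStep, Pg, MvPolynomial.aeval_C, MvPolynomial.aeval_X,
    PowerSeries.algebraMap_apply, map_add, map_sum, _root_.map_mul]

lemma step_some (c0 : ℝ) (α : Fin m → ℝ) (β : Fin m' → ℝ)
    (T : Matrix (Fin m) (Fin m) ℝ) (U : Matrix (Fin m') (Fin m') ℝ)
    (t : Fin m → ℝ) (u : Fin m' → ℝ)
    (h : Option (Fin m × Fin m') → PowerSeries ℝ) (p : Fin m × Fin m') :
    grammarStep (Pg c0 α β T U t u) h (some p) =
      PowerSeries.X * (PowerSeries.C (t p.1 * u p.2) +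
        ∑ q, PowerSeries.C (T p.1 q.1 * U p.2 q.2) * h (some q)) := by
  simp [grammarStep, Pg, MvPolynomial.aeval_C, MvPolynomial.aeval_X,
    PowerSeries.algebraMap_apply, map_add, map_sum, _root_.map_mul]

lemma coeff_G (T : Matrix (Fin m) (Fin m) ℝ) (U : Matrix (Fin m') (Fin m') ℝ)
    (t : Fin m → ℝ) (u : Fin m' → ℝ) (p : Fin m × Fin m') (n : ℕ) :
    PowerSeries.coeff n (G T U t u p) = match n with
      | 0 => (0 : ℝ)
      | Nat.succ k => (T ^ k).mulVec t p.1 * (U ^ k).mulVec u p.2 := by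
  simp [G, PowerSeries.coeff_mk]

lemma G_fix (T : Matrix (Fin m) (Fin m) ℝ) (U : Matrix (Fin m') (Fin m') ℝ)
    (t : Fin m → ℝ) (u : Fin m' → ℝ) (p : Fin m × Fin m') :
    G T U t u p = PowerSeries.X * (PowerSeries.C (t p.1 * u p.2) +
        ∑ q, PowerSeries.C (T p.1 q.1 * U p.2 q.2) * G T U t u q) := by
  ext n
  cases n with
  | zero => simp [coeff_G, PowerSeries.coeff_zero_X_mul]
  | succ n =>
    rw [PowerSeries.coeff_succ_X_mul]
    rw [map_add, map_sum]
    simp only [PowerSeries.coeff_C_mul, coeff_G, PowerSeries.coeff_C]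
    cases n with
    | zero =>
      simp [Matrix.one_mulVec]
    | succ n =>
      simp only [Nat.succ_ne_zero, if_false, zero_add]
      have hT : (T ^ (n + 1)).mulVec t p.1 =
          ∑ k, T p.1 k * (T ^ n).mulVec t k := by
        rw [pow_succ', ← Matrix.mulVec_mulVec]
        simp [Matrix.mulVec, dotProduct]
      have hU : (U ^ (n + 1)).mulVec u p.2 =
          ∑ l, U p.2 l * (U ^ n).mulVec u l := by
        rw [pow_succ', ← Matrix.mulVec_mulVec]
        simp [Matrix.mulVec, dotProduct]
      rw [hT, hU, Finset.sum_mul_sum]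
      simp only [Fintype.sum_prod_type]
      exact Finset.sum_congr rfl fun k _ => Finset.sum_congr rfl fun l _ => by ring

lemma Fg_fix (c0 : ℝ) (α : Fin m → ℝ) (β : Fin m' → ℝ)
    (T : Matrix (Fin m) (Fin m) ℝ) (U : Matrix (Fin m') (Fin m') ℝ)
    (t : Fin m → ℝ) (u : Fin m' → ℝ) (W : Option (Fin m × Fin m')) :
    Fg c0 α β T U t u W = grammarStep (Pg c0 α β T U t u) (Fg c0 α β T U t u) W := by
  cases W with
  | none => rw [step_none]; rfl
  | some p => rw [step_some]; exact G_fix T U t u p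

lemma iter_some (c0 : ℝ) (α : Fin m → ℝ) (β : Fin m' → ℝ)
    (T : Matrix (Fin m) (Fin m) ℝ) (U : Matrix (Fin m') (Fin m') ℝ)
    (t : Fin m → ℝ) (u : Fin m' → ℝ) :
    ∀ k n, n ≤ k → ∀ p, PowerSeries.coeff n (grammarIter (Pg c0 α β T U t u) k (some p)) =
      PowerSeries.coeff n (G T U t u p) := by
  intro k
  induction k with
  | zero =>
    intro n hn p
    interval_cases n
    simp [grammarIter, coeff_G]
  | succ k ih =>
    intro n hn p
    show PowerSeries.coeff n (grammarStep _ (grammarIter _ k) (some p)) = _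
    rw [step_some]
    conv_rhs => rw [G_fix T U t u p]
    cases n with
    | zero => simp [PowerSeries.coeff_zero_X_mul]
    | succ n =>
      rw [PowerSeries.coeff_succ_X_mul, PowerSeries.coeff_succ_X_mul, map_add, map_add,
        map_sum, map_sum]
      congr 1
      refine Finset.sum_congr rfl fun q _ => ?_
      rw [PowerSeries.coeff_C_mul, PowerSeries.coeff_C_mul,
        ih n (Nat.le_of_succ_le_succ hn) q]

lemma iter_none (c0 : ℝ) (α : Fin m → ℝ) (β : Fin m' → ℝ)
    (T : Matrix (Fin m) (Fin m) ℝ) (U : Matrix (Fin m') (Fin m') ℝ)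
    (t : Fin m → ℝ) (u : Fin m' → ℝ) (k n : ℕ) (hn : n ≤ k) :
    PowerSeries.coeff n (grammarIter (Pg c0 α β T U t u) (k + 1) none) =
      PowerSeries.coeff n (Fg c0 α β T U t u none) := by
  show PowerSeries.coeff n (grammarStep _ (grammarIter _ k) none) = _
  rw [step_none]
  show _ = PowerSeries.coeff n (PowerSeries.C c0 +
    ∑ p, PowerSeries.C (α p.1 * β p.2) * G T U t u p)
  rw [map_add, map_add, map_sum, map_sum]
  congr 1
  refine Finset.sum_congr rfl fun p _ => ?_
  rw [PowerSeries.coeff_C_mul, PowerSeries.coeff_C_mul, iter_some c0 α β T U t u k n hn p]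

end PHFalgAux

open PHFalgAux in
/-- If `X, Y` are independent ℕ-valued random variables with PH distributions
`a, b`, then the conditional distribution of `X` given `X = Y`, namely
`n ↦ a n · b n / s` with `s = ∑ₙ a n · b n > 0`, belongs to `F_alg`. -/
theorem ph_hadamard_conditioned_mem_falg (a b : ℕ → ℝ) (s : ℝ)
    (ha : IsPH a) (hb : IsPH b)
    (hs : HasSum (fun n => a n * b n) s) (hspos : 0 < s) :
    MemFalg (fun n => a n * b n / s) := by
  obtain ⟨⟨ha0, -⟩, m, -, α, T, hα, hαs, hT, hTrow, ha0eq, haeq⟩ := ha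
  obtain ⟨⟨hb0, -⟩, m', -, β, U, hβ, hβs, hU, hUrow, hb0eq, hbeq⟩ := hb
  set t : Fin m → ℝ := fun i => 1 - ∑ j, T i j with ht_def
  set u : Fin m' → ℝ := fun i => 1 - ∑ j, U i j with hu_def
  have ht : ∀ i, 0 ≤ t i := fun i => by simp [ht_def]; linarith [hTrow i]
  have hu : ∀ i, 0 ≤ u i := fun i => by simp [hu_def]; linarith [hUrow i]
  set c0 : ℝ := a 0 * b 0 with hc0_def
  have hc0 : 0 ≤ c0 := mul_nonneg (ha0 0) (hb0 0)
  -- the coefficients of Fg at `none` are exactly `a n * b n`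
  have key : ∀ n, PowerSeries.coeff n (Fg c0 α β T U t u none) = a n * b n := by
    intro n
    show PowerSeries.coeff n (PowerSeries.C c0 +
      ∑ p, PowerSeries.C (α p.1 * β p.2) * G T U t u p) = _
    rw [map_add, map_sum]
    simp only [PowerSeries.coeff_C_mul, coeff_G, PowerSeries.coeff_C]
    cases n with
    | zero => simp [hc0_def]
    | succ n =>
      simp only [Nat.succ_ne_zero, if_false, zero_add]
      rw [haeq (n + 1) (Nat.le_add_left 1 n), hbeq (n + 1) (Nat.le_add_left 1 n)]
      simp only [Nat.add_sub_cancel]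
      rw [dotProduct, dotProduct, Finset.sum_mul_sum]
      simp only [Fintype.sum_prod_type]
      exact Finset.sum_congr rfl fun i _ => Finset.sum_congr rfl fun j _ => by ring
  refine ⟨Option (Fin m × Fin m'), inferInstance, none, Pg c0 α β T U t u,
    Fg c0 α β T U t u, ?_, ?_, Fg_fix c0 α β T U t u, ?_, s, ?_, hspos, ?_⟩
  · -- nonnegativity of polynomial coefficients
    intro W d
    have hX : ∀ (v : Option (Option (Fin m × Fin m'))) (d),
        (0:ℝ) ≤ MvPolynomial.coeff d (MvPolynomial.X (R := ℝ) v) := by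
      intro v d
      rw [MvPolynomial.coeff_X']
      split <;> norm_num
    have hCX : ∀ (c : ℝ), 0 ≤ c → ∀ (v : Option (Option (Fin m × Fin m'))) (d),
        (0:ℝ) ≤ MvPolynomial.coeff d (MvPolynomial.C c * MvPolynomial.X (R := ℝ) v) := by
      intro c hc v d
      rw [MvPolynomial.coeff_C_mul]
      exact mul_nonneg hc (hX v d)
    cases W with
    | none =>
      show (0:ℝ) ≤ MvPolynomial.coeff d (MvPolynomial.C c0 + ∑ p, _)
      rw [MvPolynomial.coeff_add, MvPolynomial.coeff_sum]
      refine add_nonneg ?_ (Finset.sum_nonneg fun p _ =>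
        hCX _ (mul_nonneg (hα p.1) (hβ p.2)) _ _)
      rw [MvPolynomial.coeff_C]; split <;> simp [hc0]
    | some p =>
      show (0:ℝ) ≤ MvPolynomial.coeff d (MvPolynomial.X none * _)
      rw [MvPolynomial.coeff_mul]
      refine Finset.sum_nonneg fun x _ => mul_nonneg (hX none _) ?_
      rw [MvPolynomial.coeff_add, MvPolynomial.coeff_sum]
      refine add_nonneg ?_ (Finset.sum_nonneg fun q _ =>
        hCX _ (mul_nonneg (hT p.1 q.1) (hU p.2 q.2)) _ _)
      rw [MvPolynomial.coeff_C]; split <;> simp [mul_nonneg (ht p.1) (hu p.2)]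
  · -- convergence of the iteration
    intro W n
    cases W with
    | none =>
      refine tendsto_atTop_of_eventually_const (i₀ := n + 1) fun k hk => ?_
      obtain ⟨k', rfl⟩ : ∃ k', k = k' + 1 := ⟨k - 1, by omega⟩
      exact iter_none c0 α β T U t u k' n (by omega)
    | some p =>
      refine tendsto_atTop_of_eventually_const (i₀ := n) fun k hk => ?_
      exact iter_some c0 α β T U t u k n hk p
  · -- nonnegativity of the power series coefficients
    intro W n
    have hgnn : ∀ (p : Fin m × Fin m'), 0 ≤ PowerSeries.coeff n (G T U t u p) := by
      intro p
      rw [coeff_G]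
      cases n with
      | zero => exact le_refl 0
      | succ k =>
        exact mul_nonneg (mulVec_nonneg (pow_entry_nonneg hT k) ht p.1)
          (mulVec_nonneg (pow_entry_nonneg hU k) hu p.2)
    cases W with
    | none =>
      show (0:ℝ) ≤ PowerSeries.coeff n (PowerSeries.C c0 + ∑ p, _)
      rw [map_add, map_sum]
      refine add_nonneg ?_ (Finset.sum_nonneg fun p _ => ?_)
      · rw [PowerSeries.coeff_C]; split <;> simp [hc0]
      · rw [PowerSeries.coeff_C_mul]
        exact mul_nonneg (mul_nonneg (hα p.1) (hβ p.2)) (hgnn p)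
    | some p => exact hgnn p
  · -- HasSum
    exact (funext key : (fun n => PowerSeries.coeff n (Fg c0 α β T U t u none)) = _) ▸ hs
  · intro n
    rw [key n]
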